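/- arXiv:1304.1313 — 2 statements merged into one kernel-verified Lean document; each statement's English description precedes it below -/
import Mathlib

section
/- Let X be a Banach space, V a closed subspace, Y ⊆ X* a closed subspace such that R : Y → V*, R(x*) = x*↾_V, is a surjective isometry, and let P(x*) = R^{−1}(x*↾_V). Then the weak* closure of V (viewed canonically in X**) equals P*(X**), the range of the adjoint of P. -/
noncomputable section
open Metric Set NormedSpace

section aux
variable {E : Type*} [NormedAddCommGroup E] [NormedSpace ℝ E]

instance : LocallyConvexSpace ℝ (WeakDual ℝ E) :=
  WeakBilin.locallyConvexSpace (B := topDualPairing ℝ E)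

/-- Every continuous linear functional on `WeakDual ℝ E` is evaluation at a point of `E`. -/
lemma weakDual_dual_eval (f : WeakDual ℝ E →L[ℝ] ℝ) :
    ∃ e : E, ∀ x : WeakDual ℝ E, f x = x e := by
  classical
  have hb : (nhds (0 : WeakDual ℝ E)).HasBasis
      (topDualPairing ℝ E).toSeminormFamily.basisSets _root_.id :=
    (topDualPairing ℝ E).hasBasis_weakBilin
  have h0 : f ⁻¹' Metric.ball (0 : ℝ) 1 ∈ nhds (0 : WeakDual ℝ E) := by
    have h := f.continuous.tendsto 0
    rw [map_zero] at h
    exact h (Metric.ball_mem_nhds (0 : ℝ) one_pos)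
  obtain ⟨U, hU, hUsub⟩ := hb.mem_iff.mp h0
  obtain ⟨s, r, hr, rfl⟩ := (topDualPairing ℝ E).toSeminormFamily.basisSets_iff.mp hU
  -- f vanishes on the common kernel of evaluations at points of `s`
  have hker : ∀ x : WeakDual ℝ E, (∀ e ∈ s, x e = 0) → f x = 0 := by
    intro x hx
    have hmem : ∀ t : ℝ, (t • x) ∈ (s.sup (topDualPairing ℝ E).toSeminormFamily).ball 0 r := by
      intro t
      refine (Seminorm.mem_ball_zero _).2 ?_
      refine Seminorm.finset_sup_apply_lt hr ?_
      intro i hi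
      have h1 : ((topDualPairing ℝ E).toSeminormFamily i) (t • x) = 0 := by
        refine LinearMap.toSeminormFamily_apply.trans ?_
        have h2 : (topDualPairing ℝ E) (t • x) i = t * x i := by
          rfl
        rw [h2, hx i hi, mul_zero, norm_zero]
      exact lt_of_eq_of_lt h1 hr
    have habs : ∀ t : ℝ, |t| * |f x| < 1 := by
      intro t
      have := hUsub (hmem t)
      simp only [id, Set.mem_preimage, Metric.mem_ball, dist_zero_right] at this
      simpa [map_smul, smul_eq_mul, Real.norm_eq_abs, abs_mul] using this
    by_contra hfx
    have hpos : 0 < |f x| := abs_pos.mpr hfx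
    have h2 := habs (2 / |f x|)
    rw [abs_of_pos (by positivity), div_mul_cancel₀ 2 (ne_of_gt hpos)] at h2
    norm_num at h2
  -- hence `f` is a linear combination of such evaluations
  let L : s → (WeakDual ℝ E →ₗ[ℝ] ℝ) := fun i =>
    { toFun := fun x => x (i : E)
      map_add' := fun x y => rfl
      map_smul' := fun c x => rfl }
  have hle : ⨅ i : s, LinearMap.ker (L i) ≤ LinearMap.ker (f : WeakDual ℝ E →ₗ[ℝ] ℝ) := by
    intro x hx
    simp only [Submodule.mem_iInf, LinearMap.mem_ker] at hx ⊢
    exact hker x fun e he => hx ⟨e, he⟩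
  have hspan := mem_span_of_iInf_ker_le_ker hle
  obtain ⟨c, hc⟩ := (Submodule.mem_span_range_iff_exists_fun ℝ).1 hspan
  refine ⟨∑ i : s, c i • (i : E), fun x => ?_⟩
  have hx := LinearMap.congr_fun hc x
  simp only [LinearMap.sum_apply, LinearMap.smul_apply, smul_eq_mul] at hx
  rw [show f x = ((f : WeakDual ℝ E →ₗ[ℝ] ℝ) x) from rfl, ← hx]
  rw [map_sum]
  congr 1
  funext i
  rw [map_smul]
  rfl

end aux

set_option maxHeartbeats 1000000 in
set_option synthInstance.maxHeartbeats 400000 in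
/-- with `R : Y → V*` a surjective isometry and `P(x*) = R⁻¹(x*↾_V)`, the
weak* closure of `V` in `X**` equals `P*(X**)`, the range of the adjoint of `P`. -/
theorem stmt_12 (X : Type*) [NormedAddCommGroup X] [NormedSpace ℝ X] [CompleteSpace X]
    (V : Submodule ℝ X) (hVc : IsClosed (V : Set X))
    (Y : Submodule ℝ (StrongDual ℝ X)) (hYc : IsClosed (Y : Set (StrongDual ℝ X)))
    (hiso : ∀ y ∈ Y, ‖y.comp V.subtypeL‖ = ‖y‖)
    (hsurj : ∀ w : StrongDual ℝ V, ∃ y ∈ Y, y.comp V.subtypeL = w)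
    (P : StrongDual ℝ X →L[ℝ] StrongDual ℝ X)
    (hP : ∀ x : StrongDual ℝ X, P x ∈ Y ∧ (P x).comp V.subtypeL = x.comp V.subtypeL) :
    closure ((fun v : X => StrongDual.toWeakDual (inclusionInDoubleDual ℝ X v)) '' (V : Set X)) =
      StrongDual.toWeakDual '' (Set.range fun x : StrongDual ℝ (StrongDual ℝ X) => x.comp P) := by
  classical
  -- injectivity of restriction on Y
  have hinj : ∀ y ∈ Y, y.comp V.subtypeL = 0 → y = 0 := by
    intro y hy h0
    have h := hiso y hy
    rw [h0] at h
    have h2 : ‖y‖ = 0 := by rw [← h]; exact @norm_zero (↥V →L[ℝ] ℝ) _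
    exact norm_eq_zero.mp h2
  have hPidem : ∀ e : StrongDual ℝ X, P (P e) = P e := by
    intro e
    have h1 := hP e
    have h2 := hP (P e)
    have hres : (P (P e) - P e).comp V.subtypeL = 0 := by
      rw [ContinuousLinearMap.sub_comp, h2.2, sub_self]
    exact sub_eq_zero.mp (hinj _ (Y.sub_mem h2.1 h1.1) hres)
  have hPzero : ∀ e : StrongDual ℝ X, e.comp V.subtypeL = 0 → P e = 0 := by
    intro e he
    exact hinj _ (hP e).1 (by rw [(hP e).2, he])
  -- the linear embedding into the weak dual of the dual
  set J : X →ₗ[ℝ] WeakDual ℝ (StrongDual ℝ X) :=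
    (StrongDual.toWeakDual (𝕜 := ℝ) (E := StrongDual ℝ X)).toLinearMap.comp
      (inclusionInDoubleDual ℝ X).toLinearMap with hJ
  have hJapp : ∀ v : X, J v = StrongDual.toWeakDual (inclusionInDoubleDual ℝ X v) := fun v => rfl
  have hSset : ((fun v : X => StrongDual.toWeakDual (inclusionInDoubleDual ℝ X v)) '' (V : Set X))
      = ((V.map J : Submodule ℝ (WeakDual ℝ (StrongDual ℝ X))) : Set (WeakDual ℝ (StrongDual ℝ X))) := by
    rw [Submodule.map_coe]
    rfl
  -- the description of the right-hand side as a fixed-point set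
  have hRHS : (StrongDual.toWeakDual '' (Set.range fun x : StrongDual ℝ (StrongDual ℝ X) => x.comp P))
      = {G : WeakDual ℝ (StrongDual ℝ X) | ∀ e : StrongDual ℝ X, G (P e) = G e} := by
    ext G
    constructor
    · rintro ⟨-, ⟨F, rfl⟩, rfl⟩
      intro e
      show (F.comp P) (P e) = (F.comp P) e
      simp only [ContinuousLinearMap.comp_apply, hPidem]
    · intro hG
      refine ⟨((StrongDual.toWeakDual (𝕜 := ℝ) (E := StrongDual ℝ X)).symm G).comp P, ⟨_, rfl⟩, ?_⟩
      apply DFunLike.ext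
      intro e
      exact hG e
  rw [hRHS]
  have hclosed : IsClosed {G : WeakDual ℝ (StrongDual ℝ X) | ∀ e : StrongDual ℝ X, G (P e) = G e} := by
    have : {G : WeakDual ℝ (StrongDual ℝ X) | ∀ e : StrongDual ℝ X, G (P e) = G e}
        = ⋂ e : StrongDual ℝ X, {G : WeakDual ℝ (StrongDual ℝ X) | G (P e) = G e} := by
      ext G; simp [Set.mem_iInter]
    rw [this]
    exact isClosed_iInter fun e =>
      isClosed_eq (WeakDual.eval_continuous (P e)) (WeakDual.eval_continuous e)
  apply le_antisymm
  · -- closure ⊆ fixed points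
    apply closure_minimal _ hclosed
    rintro - ⟨v, hv, rfl⟩
    intro e
    show (inclusionInDoubleDual ℝ X v) (P e) = (inclusionInDoubleDual ℝ X v) e
    have := DFunLike.congr_fun (hP e).2 (⟨v, hv⟩ : V)
    simpa using this
  · -- fixed points ⊆ closure
    intro G hG
    by_contra hGc
    have hconv : Convex ℝ (closure
        ((fun v : X => StrongDual.toWeakDual (inclusionInDoubleDual ℝ X v)) '' (V : Set X))) := by
      refine Convex.closure ?_
      rw [hSset]
      exact (V.map J).convex
    obtain ⟨f, u, hfa, hfG⟩ := geometric_hahn_banach_closed_point hconv isClosed_closure hGc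
    -- f vanishes on the closure of the image of V
    set S : Submodule ℝ (WeakDual ℝ (StrongDual ℝ X)) := (V.map J).topologicalClosure with hS
    have hSc : closure ((fun v : X => StrongDual.toWeakDual (inclusionInDoubleDual ℝ X v)) '' (V : Set X))
        = (S : Set (WeakDual ℝ (StrongDual ℝ X))) := by
      rw [hSset]
      exact (V.map J).topologicalClosure_coe.symm
    have hzero : ∀ a ∈ S, f a = 0 := by
      intro a ha
      by_contra hfa0
      have hmem : (u / f a) • a ∈ S := S.smul_mem _ ha
      have := hfa _ (by rw [hSc]; exact hmem)
      rw [map_smul, smul_eq_mul, div_mul_cancel₀ u hfa0] at this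
      exact lt_irrefl u this
    have hu : 0 < u := by
      have h0 : (0 : WeakDual ℝ (StrongDual ℝ X)) ∈ S := S.zero_mem
      have := hfa 0 (by rw [hSc]; exact h0)
      rwa [map_zero] at this
    obtain ⟨e, he⟩ := weakDual_dual_eval f
    have heV : e.comp V.subtypeL = 0 := by
      apply ContinuousLinearMap.ext
      rintro ⟨v, hv⟩
      have hvS : J v ∈ S := Submodule.le_topologicalClosure _ ⟨v, hv, rfl⟩
      have := hzero _ hvS
      rw [he] at this
      simpa using (show e v = 0 from this)
    have hPe : P e = 0 := hPzero e heV
    have hGe : f G = 0 := by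
      rw [he G, ← hG e, hPe, map_zero]
    rw [hGe] at hfG
    exact absurd hfG (not_lt.mpr hu.le)
end
end

section
/- Let X be a Banach space, γ a limit ordinal, and (V_α)_{α<γ} an increasing family of closed subspaces of X with closed subspaces Y_α ⊆ X* such that each restriction map R_α : Y_α → V_α*, x* ↦ x*↾_{V_α}, is an isometry. Let V be the closed linear span of ∪_α V_α and Y the closed linear span of ∪_α Y_α. Then the restriction map R : Y → V*, x* ↦ x*↾_V, is an isometry. -/
set_option maxHeartbeats 800000
set_option synthInstance.maxHeartbeats 400000
noncomputable section
open Metric Set NormedSpace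

/-- for an increasing family `(V_α)_{α<γ}` (`γ` a limit ordinal) of closed
subspaces with closed `Y_α ⊆ X*` such that each restriction `R_α : Y_α → V_α*` is an
isometry, the restriction map from `Y = cl span(∪ Y_α)` to `V* = (cl span(∪ V_α))*` is an
isometry. -/
theorem stmt_16 (X : Type*) [NormedAddCommGroup X] [NormedSpace ℝ X] [CompleteSpace X]
    (γ : Ordinal) (hγ : Order.IsSuccLimit γ)
    (V : Ordinal → Submodule ℝ X) (Y : Ordinal → Submodule ℝ (StrongDual ℝ X))
    (hVc : ∀ α < γ, IsClosed (V α : Set X))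
    (hYc : ∀ α < γ, IsClosed (Y α : Set (StrongDual ℝ X)))
    (hVmono : ∀ α β : Ordinal, α ≤ β → β < γ → V α ≤ V β)
    (hYmono : ∀ α β : Ordinal, α ≤ β → β < γ → Y α ≤ Y β)
    (hiso : ∀ α < γ, ∀ y ∈ Y α, ‖y.comp (V α).subtypeL‖ = ‖y‖) :
    ∀ y ∈ (⨆ α ∈ Set.Iio γ, Y α).topologicalClosure,
      ‖y.comp (⨆ α ∈ Set.Iio γ, V α).topologicalClosure.subtypeL‖ = ‖y‖ := by
  set W := (⨆ α ∈ Set.Iio γ, V α).topologicalClosure with hW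
  have hsub : ∀ α < γ, V α ≤ W := fun α hα =>
    le_trans (le_iSup₂ (f := fun α _ => V α) α hα) (Submodule.le_topologicalClosure _)
  have key : ∀ z ∈ (⨆ α ∈ Set.Iio γ, Y α), ‖z.comp W.subtypeL‖ = ‖z‖ := by
    intro z hz
    have hex : ∃ α : Set.Iio γ, z ∈ Y α := by
      have hdir : Directed (· ≤ ·) (fun α : Set.Iio γ => Y α) := by
        intro a b
        rcases le_total (a : Ordinal) b with h | h
        · exact ⟨b, hYmono a b h b.2, le_rfl⟩
        · exact ⟨a, le_rfl, hYmono b a h a.2⟩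
      have hne : Nonempty (Set.Iio γ) := ⟨⟨0, hγ.pos⟩⟩
      rw [iSup_subtype'] at hz
      exact (Submodule.mem_iSup_of_directed _ hdir).1 hz
    obtain ⟨⟨α, hα⟩, hzα⟩ := hex
    have h1 : ‖z.comp W.subtypeL‖ ≤ ‖z‖ := by
      refine ContinuousLinearMap.opNorm_le_bound _ (norm_nonneg z) fun x => ?_
      calc ‖(z.comp W.subtypeL) x‖ ≤ ‖z‖ * ‖W.subtypeL x‖ := z.le_opNorm _
        _ = ‖z‖ * ‖x‖ := by simp
    have h2 : ‖z‖ ≤ ‖z.comp W.subtypeL‖ := by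
      rw [← hiso α hα z hzα]
      refine ContinuousLinearMap.opNorm_le_bound _ (ContinuousLinearMap.opNorm_nonneg (z.comp W.subtypeL)) fun x => ?_
      have := (z.comp W.subtypeL).le_opNorm ⟨(x : X), hsub α hα x.2⟩
      simpa using this
    exact le_antisymm h1 h2
  intro y hy
  have hcont : Continuous fun z : StrongDual ℝ X => z.comp W.subtypeL :=
    ((ContinuousLinearMap.compL ℝ W X ℝ).flip W.subtypeL).continuous
  have hclosed : IsClosed {z : StrongDual ℝ X | ‖z.comp W.subtypeL‖ = ‖z‖} :=
    isClosed_eq (Continuous.comp (continuous_norm (E := W →L[ℝ] ℝ)) hcont) continuous_norm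
  have : y ∈ closure ((⨆ α ∈ Set.Iio γ, Y α : Submodule ℝ (StrongDual ℝ X)) : Set (StrongDual ℝ X)) := hy
  exact closure_minimal key hclosed this
end
end
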